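/- Let S ⊂ ℝ^{n+1} be a hypersphere with constant mean curvature H with respect to a unit normal field N, and let Ψ : ℝ^{n+1} → 𝔼^{n+1} ⊂ 𝕃^{n+3} be the isometric embedding into the light cone model. Then v = HΨ + Ψ_*N is a constant spacelike unit vector in 𝕃^{n+3}, and Ψ(S) = 𝔼^{n+1} ∩ {v}^⊥. -/

import Mathlib

open scoped RealInnerProductSpace

/-- The Lorentzian inner product of signature `(n+2, 1)` on `ℝ^{n+3}`. -/
noncomputable def mink (n : ℕ) (x y : Fin (n + 3) → ℝ) : ℝ :=
  (∑ i : Fin (n + 2), x i.castSucc * y i.castSucc) - x (Fin.last (n + 2)) * y (Fin.last (n + 2))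


private lemma mink_symm (n : ℕ) (x y : Fin (n+3) → ℝ) : mink n x y = mink n y x := by
  unfold mink
  congr 1
  · exact Finset.sum_congr rfl fun i _ => mul_comm _ _
  · ring

private lemma mink_add_left (n : ℕ) (x y z : Fin (n+3) → ℝ) :
    mink n (x + y) z = mink n x z + mink n y z := by
  simp [mink, add_mul, Finset.sum_add_distrib]; ring

private lemma mink_smul_left (n : ℕ) (c : ℝ) (x y : Fin (n+3) → ℝ) :
    mink n (c • x) y = c * mink n x y := by
  simp [mink, Finset.mul_sum, mul_assoc, mul_sub]

private lemma mink_sub_left (n : ℕ) (x y z : Fin (n+3) → ℝ) :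
    mink n (x - y) z = mink n x z - mink n y z := by
  simp [mink, sub_mul, Finset.sum_sub_distrib]; ring

private lemma mink_add_right (n : ℕ) (x y z : Fin (n+3) → ℝ) :
    mink n x (y + z) = mink n x y + mink n x z := by
  rw [mink_symm, mink_add_left, mink_symm n y, mink_symm n z]

private lemma mink_smul_right (n : ℕ) (c : ℝ) (x y : Fin (n+3) → ℝ) :
    mink n x (c • y) = c * mink n x y := by
  rw [mink_symm, mink_smul_left, mink_symm]

private lemma mink_sub_right (n : ℕ) (x y z : Fin (n+3) → ℝ) :
    mink n x (y - z) = mink n x y - mink n x z := by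
  rw [mink_symm, mink_sub_left, mink_symm n y, mink_symm n z]

/-- For a hypersphere `S ⊂ ℝ^{n+1}` with constant mean curvature `H` and unit normal `N`
(shape operator `H·id`), the vector `v = HΨ + Ψ_*N` is a constant spacelike unit vector in
Minkowski space, and `Ψ(S) = 𝔼^{n+1} ∩ {v}^⊥` in the light cone model. -/
theorem stmt18 {n : ℕ}
    (w p₀ : Fin (n + 3) → ℝ)
    (hw : mink n w w = 0) (hp₀ : mink n p₀ p₀ = 0) (hpw : mink n p₀ w = 1)
    (D : EuclideanSpace ℝ (Fin (n + 1)) →ₗ[ℝ] (Fin (n + 3) → ℝ))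
    (hDiso : ∀ u v, mink n (D u) (D v) = ⟪u, v⟫)
    (hDperp : ∀ u, mink n (D u) w = 0 ∧ mink n (D u) p₀ = 0)
    (hDsurj : ∀ q : Fin (n + 3) → ℝ, mink n q w = 0 → mink n q p₀ = 0 → q ∈ LinearMap.range D)
    (Ψ : EuclideanSpace ℝ (Fin (n + 1)) → Fin (n + 3) → ℝ)
    (hΨ : ∀ x, Ψ x = p₀ + D x - (‖x‖ ^ 2 / 2) • w)
    (H : ℝ) (hH : H ≠ 0) (q₀ : EuclideanSpace ℝ (Fin (n + 1)))
    (S : Set (EuclideanSpace ℝ (Fin (n + 1)))) (hS : S = Metric.sphere q₀ |H|⁻¹)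
    (N : EuclideanSpace ℝ (Fin (n + 1)) → EuclideanSpace ℝ (Fin (n + 1)))
    (hN : ∀ q, N q = H • (q₀ - q))
    (v : EuclideanSpace ℝ (Fin (n + 1)) → Fin (n + 3) → ℝ)
    -- `v q = H Ψ(q) + dΨ_q(N q)`:
    (hv : ∀ q, v q = H • Ψ q + (D (N q) - ⟪q, N q⟫ • w)) :
    (∀ q ∈ S, ∀ q' ∈ S, v q = v q')
      ∧ (∀ q ∈ S, mink n (v q) (v q) = 1)
      ∧ ∀ q ∈ S, Ψ '' S = {p | mink n p p = 0 ∧ mink n p w = 1 ∧ mink n p (v q) = 0} := by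
  
  have hwp : mink n w p₀ = 1 := by rw [mink_symm]; exact hpw
  have hwD : ∀ u, mink n w (D u) = 0 := fun u => by rw [mink_symm]; exact (hDperp u).1
  have hpD : ∀ u, mink n p₀ (D u) = 0 := fun u => by rw [mink_symm]; exact (hDperp u).2
  set c : ℝ := H * (H⁻¹ ^ 2 - ‖q₀‖ ^ 2) / 2 with hc
  set V : Fin (n + 3) → ℝ := H • p₀ + H • D q₀ + c • w with hV
  have hsq : ∀ q ∈ S, ‖q‖ ^ 2 - 2 * ⟪q, q₀⟫ + ‖q₀‖ ^ 2 = H⁻¹ ^ 2 := by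
    intro q hq
    rw [hS, mem_sphere_iff_norm] at hq
    have h2 : ‖q - q₀‖ ^ 2 = (|H|⁻¹) ^ 2 := by rw [hq]
    rw [norm_sub_sq_real, ← abs_inv, sq_abs] at h2
    linarith
  have hvq : ∀ q ∈ S, v q = V := by
    intro q hq
    have h1 := hsq q hq
    rw [hv, hΨ, hN, map_smul, map_sub, hV]
    funext i
    simp only [Pi.add_apply, Pi.sub_apply, Pi.smul_apply, smul_eq_mul,
      inner_smul_right, inner_sub_right, real_inner_self_eq_norm_sq]
    linear_combination (H * w i / 2) * h1
  have hVV : mink n V V = 1 := by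
    rw [hV]
    simp only [mink_add_left, mink_add_right, mink_smul_left, mink_smul_right,
      hw, hp₀, hpw, hwp, hwD, hpD, hDiso, (hDperp q₀).1, (hDperp q₀).2,
      real_inner_self_eq_norm_sq]
    field_simp [hc]
    rw [hc]; linear_combination (H * H⁻¹ + 1) * mul_inv_cancel₀ hH
  have hΨw : ∀ x, mink n (Ψ x) w = 1 := by
    intro x
    rw [hΨ]
    simp [mink_add_left, mink_sub_left, mink_smul_left, hw, hpw, (hDperp x).1]
  have hΨΨ : ∀ x, mink n (Ψ x) (Ψ x) = 0 := by
    intro x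
    rw [hΨ]
    simp only [mink_add_left, mink_add_right, mink_sub_left, mink_sub_right,
      mink_smul_left, mink_smul_right, hw, hp₀, hpw, hwp, hwD, hpD, hDiso,
      (hDperp x).1, (hDperp x).2, real_inner_self_eq_norm_sq]
    ring
  have hΨV : ∀ x, mink n (Ψ x) V = H * ⟪x, q₀⟫ - H * ‖x‖ ^ 2 / 2 + c := by
    intro x
    rw [hΨ, hV]
    simp only [mink_add_left, mink_add_right, mink_sub_left, mink_smul_left,
      mink_smul_right, hw, hp₀, hpw, hwp, hwD, hpD, hDiso, (hDperp x).1, (hDperp x).2,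
      real_inner_self_eq_norm_sq]
    ring
  refine ⟨fun q hq q' hq' => by rw [hvq q hq, hvq q' hq'],
    fun q hq => by rw [hvq q hq]; exact hVV, fun q hq => ?_⟩
  rw [hvq q hq]
  ext p
  constructor
  · rintro ⟨x, hxS, rfl⟩
    refine ⟨hΨΨ x, hΨw x, ?_⟩
    rw [hΨV x, hc]
    linear_combination (-H / 2) * hsq x hxS
  · rintro ⟨hpp, hpw', hpV⟩
    set α : ℝ := mink n p p₀ with hα
    have h1 : mink n (p - p₀ - α • w) w = 0 := by
      simp [mink_sub_left, mink_smul_left, hw, hpw, hpw']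
    have h2 : mink n (p - p₀ - α • w) p₀ = 0 := by
      simp [mink_sub_left, mink_smul_left, hp₀, hwp, ← hα]
    obtain ⟨x, hx⟩ := hDsurj _ h1 h2
    have hp' : p = p₀ + D x + α • w := by rw [hx]; abel
    have hαval : α = -(‖x‖ ^ 2) / 2 := by
      have := hpp
      rw [hp'] at this
      simp only [mink_add_left, mink_add_right, mink_smul_left, mink_smul_right,
        hw, hp₀, hpw, hwp, hwD, hpD, hDiso, (hDperp x).1, (hDperp x).2,
        real_inner_self_eq_norm_sq] at this
      linarith
    have hpΨ : p = Ψ x := by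
      rw [hΨ, hp', hαval]
      module
    have hxS : x ∈ S := by
      rw [hpΨ] at hpV
      rw [hΨV x, hc] at hpV
      have hH2 : H * H⁻¹ = 1 := mul_inv_cancel₀ hH
      have hsq' : ‖x‖ ^ 2 - 2 * ⟪x, q₀⟫ + ‖q₀‖ ^ 2 = H⁻¹ ^ 2 := by
        linear_combination (-2 * H⁻¹) * hpV +
          (-(‖x‖ ^ 2 - 2 * ⟪x, q₀⟫ + ‖q₀‖ ^ 2 - H⁻¹ ^ 2)) * hH2
      rw [hS, mem_sphere_iff_norm]
      have hn : ‖x - q₀‖ ^ 2 = (|H|⁻¹) ^ 2 := by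
        rw [norm_sub_sq_real, ← abs_inv, sq_abs]
        linarith
      have h0 : (0:ℝ) ≤ |H|⁻¹ := by positivity
      nlinarith [norm_nonneg (x - q₀)]
    exact ⟨x, hxS, hpΨ.symm⟩
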